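/- Fix t ≥ 1 and a ≤ b - 2t + 2, and let α = [1, a, a+1, ..., a+2t-3, b]. For a strictly increasing sequence β = [b_1,...,b_{2s}] with s ≤ t, β ≱ α holds if and only if (b_2 ≤ a - 1) or (s = t and b_{2t} ≤ b - 1). Consequently, the set of Pfaffians of size at most 2t among the natural generators of I_α(X) is {[c,d,*,...,*] : c < d ≤ a-1} ∪ {[e_1,...,e_{2t}] : e_{2t} ≤ b-1}. -/

import Mathlib

/-- The Pfaffian partial order on index lists. -/
def pfLe (x y : List ℕ) : Prop :=
  y.length ≤ x.length ∧ ∀ i < y.length, x.getD i 0 ≤ y.getD i 0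

/-- In a strictly increasing list of naturals, entries grow at least linearly. -/
lemma chain'_getD_add_le (l : List ℕ) (h : l.Chain' (· < ·)) :
    ∀ j, j < l.length → ∀ i, i ≤ j → l.getD i 0 + (j - i) ≤ l.getD j 0 := by
  intro j hj
  induction j with
  | zero => intro i hi; interval_cases i; simp
  | succ k ih =>
    intro i hi
    have hk : k < l.length := by omega
    have step : l.getD k 0 < l.getD (k + 1) 0 := by
      have hstep := List.isChain_iff_getElem.mp h k (by omega)
      rw [List.getD_eq_getElem l 0 hk, List.getD_eq_getElem l 0 hj]
      simpa [List.get_eq_getElem] using hstep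
    rcases Nat.lt_or_ge i (k + 1) with h1 | h1
    · have := ih hk i (by omega)
      omega
    · have : i = k + 1 := by omega
      subst this; simp

/-- For `α = [1, a, a+1, ..., a+2t-3, b]` and a strictly increasing `β = [b_1,...,b_{2s}]`
with `s ≤ t`, one has `β ≱ α` iff `b_2 ≤ a - 1`, or `s = t` and `b_{2t} ≤ b - 1`.
Consequently the natural generators of `I_α(X)` of size at most `2t` are exactly the
Pfaffians `[c,d,*,...,*]` with `c < d ≤ a-1` together with the `2t`-Pfaffians
`[e_1,...,e_{2t}]` with `e_{2t} ≤ b-1`. -/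
theorem generators_description (n t a b : ℕ) (ht : 1 ≤ t) (ha : 2 ≤ a)
    (hab : a + 2 * t - 2 ≤ b) :
    let αL : List ℕ := 1 :: ((List.range (2 * t - 2)).map (· + a) ++ [b])
    (∀ s : ℕ, 1 ≤ s → s ≤ t → ∀ β : List ℕ, β.Chain' (· < ·) → β.length = 2 * s →
      (∀ x ∈ β, 1 ≤ x ∧ x ≤ n) →
      (¬ pfLe αL β ↔
        (β.getD 1 0 ≤ a - 1 ∨ (s = t ∧ β.getD (2 * t - 1) 0 ≤ b - 1)))) ∧
    ({β : List ℕ | ∃ s : ℕ, 1 ≤ s ∧ s ≤ t ∧ β.Chain' (· < ·) ∧ β.length = 2 * s ∧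
        (∀ x ∈ β, 1 ≤ x ∧ x ≤ n) ∧ ¬ pfLe αL β} =
      {β : List ℕ | ∃ s : ℕ, 1 ≤ s ∧ s ≤ t ∧ β.Chain' (· < ·) ∧ β.length = 2 * s ∧
        (∀ x ∈ β, 1 ≤ x ∧ x ≤ n) ∧ β.getD 1 0 ≤ a - 1} ∪
      {β : List ℕ | β.Chain' (· < ·) ∧ β.length = 2 * t ∧
        (∀ x ∈ β, 1 ≤ x ∧ x ≤ n) ∧ β.getD (2 * t - 1) 0 ≤ b - 1}) := by
  intro αL
  have hαdef : αL = 1 :: ((List.range (2 * t - 2)).map (· + a) ++ [b]) := rfl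
  have hlenα : αL.length = 2 * t := by
    rw [hαdef]; simp; omega
  have hα0 : αL.getD 0 0 = 1 := rfl
  have hαmid : ∀ i, 1 ≤ i → i ≤ 2 * t - 2 → αL.getD i 0 = a + i - 1 := by
    intro i hi1 hi2
    obtain ⟨j, rfl⟩ : ∃ j, i = j + 1 := ⟨i - 1, by omega⟩
    rw [hαdef, List.getD_cons_succ]
    have hj : j < ((List.range (2 * t - 2)).map (· + a)).length := by simp; omega
    rw [List.getD_eq_getElem _ 0 (by simp at hj ⊢; omega),
      List.getElem_append_left hj, List.getElem_map, List.getElem_range]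
    omega
  have hαlast : αL.getD (2 * t - 1) 0 = b := by
    obtain ⟨j, hj⟩ : ∃ j, 2 * t - 1 = j + 1 ∧ j = 2 * t - 2 := ⟨2 * t - 2, by omega, rfl⟩
    rw [hj.1, hαdef, List.getD_cons_succ]
    rw [List.getD_eq_getElem _ 0 (by simp; omega),
      List.getElem_append_right (by simp; omega)]
    simp [hj.2]
  have hαge : ∀ i, 1 ≤ i → i ≤ 2 * t - 1 → a + i - 1 ≤ αL.getD i 0 := by
    intro i hi1 hi2
    rcases Nat.lt_or_ge i (2 * t - 1) with h | h
    · rw [hαmid i hi1 (by omega)]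
    · have : i = 2 * t - 1 := by omega
      rw [this, hαlast]; omega
  have key : ∀ s : ℕ, 1 ≤ s → s ≤ t → ∀ β : List ℕ, β.Chain' (· < ·) → β.length = 2 * s →
      (∀ x ∈ β, 1 ≤ x ∧ x ≤ n) →
      (¬ pfLe αL β ↔
        (β.getD 1 0 ≤ a - 1 ∨ (s = t ∧ β.getD (2 * t - 1) 0 ≤ b - 1))) := by
    intro s hs1 hst β hch hlen hbd
    constructor
    · intro hnot
      by_contra hcon
      push_neg at hcon
      obtain ⟨h1, h2⟩ := hcon
      apply hnot
      refine ⟨by omega, ?_⟩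
      intro i hiβ
      rw [hlen] at hiβ
      rcases Nat.eq_zero_or_pos i with rfl | hi0
      · rw [hα0, List.getD_eq_getElem β 0 (show 0 < β.length by omega)]
        exact (hbd _ (List.getElem_mem _)).1
      · have hβ1 : a ≤ β.getD 1 0 := by omega
        have hmono := chain'_getD_add_le β hch i (by omega) 1 hi0
        rcases Nat.lt_or_ge i (2 * t - 1) with hi | hi
        · rw [hαmid i hi0 (by omega)]
          omega
        · have hi' : i = 2 * t - 1 := by omega
          have hseq : s = t := by omega
          subst hi'
          rw [hαlast]
          have := h2 hseq
          omega
    · rintro (h1 | ⟨hseq, h2⟩) hpf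
      · obtain ⟨hle, hall⟩ := hpf
        have hh := hall 1 (by omega)
        have := hαge 1 le_rfl (by omega)
        omega
      · obtain ⟨hle, hall⟩ := hpf
        have hh := hall (2 * t - 1) (by omega)
        rw [hαlast] at hh
        omega
  refine ⟨key, ?_⟩
  ext β
  simp only [Set.mem_setOf_eq, Set.mem_union]
  constructor
  · rintro ⟨s, hs1, hst, hch, hlen, hbd, hnot⟩
    rw [key s hs1 hst β hch hlen hbd] at hnot
    rcases hnot with h1 | ⟨rfl, h2⟩
    · exact Or.inl ⟨s, hs1, hst, hch, hlen, hbd, h1⟩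
    · exact Or.inr ⟨hch, hlen, hbd, h2⟩
  · rintro (⟨s, hs1, hst, hch, hlen, hbd, h1⟩ | ⟨hch, hlen, hbd, h2⟩)
    · exact ⟨s, hs1, hst, hch, hlen, hbd, (key s hs1 hst β hch hlen hbd).mpr (Or.inl h1)⟩
    · exact ⟨t, ht, le_rfl, hch, hlen, hbd,
        (key t ht le_rfl β hch hlen hbd).mpr (Or.inr ⟨rfl, h2⟩)⟩
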